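/- For every s > 0 and every t ∈ (0,1), one has g₀(t·s) > t · g₀(s). -/

import Mathlib

open MeasureTheory Set Filter

/-- Hypotheses on the function `f₁` from Section 6.1 of the paper. -/
structure F1Hyp (ℓ ℓ₁ : ℝ) (f₁ : ℝ → ℝ) : Prop where
  hl : 0 < ℓ
  hl1 : 0 < ℓ₁
  cont : ContinuousOn f₁ (Icc 0 1)
  diff : ∃ d : ℝ → ℝ, ContinuousOn d (Ioc 0 1) ∧
    ∀ t ∈ Ioc (0:ℝ) 1, HasDerivWithinAt f₁ (d t) (Ioc 0 1) t
  anti : StrictAntiOn f₁ (Icc 0 1)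
  nonneg : ∀ t ∈ Icc (0:ℝ) 1, 0 ≤ f₁ t
  f10 : f₁ 0 = ℓ
  f11 : f₁ 1 = 0
  convexSqrt : ConvexOn ℝ (Icc 0 1) (fun u => f₁ (Real.sqrt u))
  lim0 : Tendsto (fun s => (f₁ s - ℓ + ℓ₁ * s) / s) (nhdsWithin 0 (Ioi 0)) (nhds 0)

/-- `γ` is admissible, with a.e. derivative `γ'` (absolute continuity is encoded by the
fundamental theorem of calculus representation with an `L¹` derivative). -/
def Admissible (γ γ' : ℝ → ℝ) : Prop :=
  IntegrableOn γ' (Icc 0 1) ∧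
  (∀ t ∈ Icc (0:ℝ) 1, γ t = ∫ u in (0:ℝ)..t, γ' u) ∧
  (∀ t ∈ Icc (0:ℝ) 1, 0 ≤ γ t ∧ γ t ≤ 1) ∧
  γ 0 = 0 ∧ γ 1 = 0

/-- The energy in the characterization (6.11). -/
noncomputable def energy (f₁ : ℝ → ℝ) (s : ℝ) (γ γ' : ℝ → ℝ) : ℝ :=
  ∫ t in (0:ℝ)..1, Real.sqrt (s ^ 2 * (f₁ (Real.sqrt (γ t))) ^ 2 + (γ' t) ^ 2 / 4)

/-- The cohesive energy density of pristine material, via characterization (6.11). -/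
noncomputable def g0 (f₁ : ℝ → ℝ) (s : ℝ) : ℝ :=
  sInf {x | ∃ γ γ' : ℝ → ℝ, Admissible γ γ' ∧ x = energy f₁ s γ γ'}


lemma aux_sqrt_add_sq_le {x y : ℝ} (hx : 0 ≤ x) (hy : 0 ≤ y) :
    Real.sqrt (x^2 + y^2) ≤ x + y := by
  rw [show x + y = Real.sqrt ((x+y)^2) by rw [Real.sqrt_sq (by linarith)]]
  exact Real.sqrt_le_sqrt (by nlinarith)

lemma aux_key (t a q : ℝ) (ht0 : 0 ≤ t) (ht1 : t ≤ 1) (hq : 0 ≤ q) :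
    t * Real.sqrt (a^2+q) + (1-t) * (q / Real.sqrt (a^2+q)) ≤ Real.sqrt (t^2*a^2+q) := by
  set A := Real.sqrt (a^2+q) with hA
  have hAnn : 0 ≤ A := Real.sqrt_nonneg _
  have hA2 : A^2 = a^2 + q := Real.sq_sqrt (by positivity)
  rcases eq_or_lt_of_le hAnn with h0 | hApos
  · have hq0 : a^2 + q = 0 := by
      have := Real.sqrt_eq_zero'.mp h0.symm
      nlinarith
    have ha : a = 0 := by nlinarith
    have hq' : q = 0 := by nlinarith
    simp [← h0, ha, hq']
  · have hkey : t*a^2 + q ≤ Real.sqrt (t^2*a^2+q) * A := by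
      have h1 : Real.sqrt (t^2*a^2+q) * A = Real.sqrt ((t^2*a^2+q)*(a^2+q)) := by
        rw [Real.sqrt_mul (by positivity)]
      rw [h1]
      refine (Real.le_sqrt (by nlinarith) (by positivity)).mpr ?_
      nlinarith [mul_nonneg hq (sq_nonneg (a*(1-t)))]
    have hLHS : t * A + (1-t) * (q/A) = (t*a^2 + q)/A := by
      field_simp
      nlinarith [hA2]
    rw [hLHS, div_le_iff₀ hApos]
    exact hkey

lemma aux_bbound {b A c β : ℝ} (hb : 0 ≤ b) (hbA : b ≤ A) (hAc : A ≤ c + b)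
    (hβ : 0 < β) (hc : 0 ≤ c) : b ≤ β + (1 + c/β) * (b^2 / A) := by
  obtain ⟨r, hr, rfl⟩ : ∃ r, 0 ≤ r ∧ c = r*β :=
    ⟨c/β, by positivity, (div_mul_cancel₀ _ hβ.ne').symm⟩
  rw [mul_div_cancel_right₀ _ hβ.ne']
  rcases le_or_gt b β with h | h
  · have hAnn : 0 ≤ A := hb.trans hbA
    have h1 : 0 ≤ (1 + r) * (b^2/A) := by positivity
    linarith
  · have hApos : 0 < A := lt_of_lt_of_le (lt_of_lt_of_le hβ h.le) hbA
    have : b ≤ (1 + r) * (b^2/A) := by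
      rw [mul_div_assoc', le_div_iff₀ hApos]
      nlinarith [mul_le_mul_of_nonneg_left hAc hb,
        mul_nonneg (mul_nonneg hr hb) (by linarith : (0:ℝ) ≤ b - β)]
    linarith [hβ.le]

lemma adm_zero : Admissible (fun _ => 0) (fun _ => 0) := by
  refine ⟨integrableOn_const measure_Icc_lt_top.ne, ?_, by simp, rfl, rfl⟩
  intro t ht; simp

lemma adm_cont {γ γ' : ℝ → ℝ} (h : Admissible γ γ') : ContinuousOn γ (Icc 0 1) := by
  have h1 : ContinuousOn (fun x => ∫ t in Ioc (0:ℝ) x, γ' t) (Icc 0 1) :=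
    intervalIntegral.continuousOn_primitive h.1
  refine h1.congr fun x hx => ?_
  rw [h.2.1 x hx, intervalIntegral.integral_of_le hx.1]

lemma adm_F_cont {f₁ : ℝ → ℝ} (hcont : ContinuousOn f₁ (Icc 0 1))
    {γ γ' : ℝ → ℝ} (h : Admissible γ γ') :
    ContinuousOn (fun x => f₁ (Real.sqrt (γ x))) (Icc 0 1) := by
  have hsq : ContinuousOn (fun x => Real.sqrt (γ x)) (Icc 0 1) :=
    Real.continuous_sqrt.comp_continuousOn (adm_cont h)
  refine hcont.comp hsq fun x hx => ?_
  obtain ⟨h0, h1⟩ := h.2.2.1 x hx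
  exact ⟨Real.sqrt_nonneg _, by
    rw [show (1:ℝ) = Real.sqrt 1 by simp]; exact Real.sqrt_le_sqrt h1⟩

lemma f1_le {ℓ : ℝ} {f₁ : ℝ → ℝ} (anti : StrictAntiOn f₁ (Icc 0 1))
    (f10 : f₁ 0 = ℓ) {u : ℝ} (hu : u ∈ Icc (0:ℝ) 1) : f₁ u ≤ ℓ := by
  rcases eq_or_lt_of_le hu.1 with h | h
  · rw [← h, f10]
  · rw [← f10]
    exact (anti (by constructor <;> norm_num) hu h).le

lemma energy_integrand_integrable {ℓ : ℝ} {f₁ : ℝ → ℝ}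
    (hcont : ContinuousOn f₁ (Icc 0 1)) (anti : StrictAntiOn f₁ (Icc 0 1))
    (nonneg : ∀ t ∈ Icc (0:ℝ) 1, 0 ≤ f₁ t) (f10 : f₁ 0 = ℓ) (hl : 0 < ℓ)
    {γ γ' : ℝ → ℝ} (h : Admissible γ γ') (τ : ℝ) :
    IntervalIntegrable
      (fun x => Real.sqrt (τ ^ 2 * (f₁ (Real.sqrt (γ x))) ^ 2 + (γ' x) ^ 2 / 4))
      volume 0 1 := by
  rw [intervalIntegrable_iff, uIoc_of_le (by norm_num : (0:ℝ) ≤ 1)]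
  set F := fun x => f₁ (Real.sqrt (γ x)) with hF
  have hFc : ContinuousOn F (Icc 0 1) := adm_F_cont hcont h
  have hFm : AEStronglyMeasurable F (volume.restrict (Ioc (0:ℝ) 1)) :=
    (hFc.mono Ioc_subset_Icc_self).aestronglyMeasurable measurableSet_Ioc
  have hg'm : AEStronglyMeasurable γ' (volume.restrict (Ioc (0:ℝ) 1)) :=
    (h.1.mono_set Ioc_subset_Icc_self).aestronglyMeasurable
  have hm : AEStronglyMeasurable
      (fun x => Real.sqrt (τ ^ 2 * (F x) ^ 2 + (γ' x) ^ 2 / 4))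
      (volume.restrict (Ioc (0:ℝ) 1)) := by
    apply Real.continuous_sqrt.comp_aestronglyMeasurable
    have h1 : AEStronglyMeasurable (fun x => τ ^ 2 * (F x * F x) + (4:ℝ)⁻¹ * (γ' x * γ' x))
        (volume.restrict (Ioc (0:ℝ) 1)) :=
      (aestronglyMeasurable_const.mul (hFm.mul hFm)).add
        (aestronglyMeasurable_const.mul (hg'm.mul hg'm))
    exact h1.congr (Eventually.of_forall fun x => by ring)
  refine Integrable.mono' (g := fun x => |τ| * ℓ + |γ' x| / 2) ?_ hm ?_
  · exact (integrable_const _).add ((h.1.mono_set Ioc_subset_Icc_self).abs.div_const 2)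
  · filter_upwards [ae_restrict_mem measurableSet_Ioc] with x hx
    have hx' : x ∈ Icc (0:ℝ) 1 := Ioc_subset_Icc_self hx
    have hFx : 0 ≤ F x ∧ F x ≤ ℓ := by
      constructor
      · apply nonneg
        exact ⟨Real.sqrt_nonneg _, by
          rw [show (1:ℝ) = Real.sqrt 1 by simp]
          exact Real.sqrt_le_sqrt (h.2.2.1 x hx').2⟩
      · apply f1_le anti f10
        exact ⟨Real.sqrt_nonneg _, by
          rw [show (1:ℝ) = Real.sqrt 1 by simp]
          exact Real.sqrt_le_sqrt (h.2.2.1 x hx').2⟩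
    rw [Real.norm_eq_abs, abs_of_nonneg (Real.sqrt_nonneg _)]
    calc Real.sqrt (τ ^ 2 * F x ^ 2 + γ' x ^ 2 / 4)
        = Real.sqrt ((|τ| * F x)^2 + (|γ' x| / 2)^2) := by
          congr 1
          rw [mul_pow, sq_abs, div_pow, sq_abs]; ring
      _ ≤ |τ| * F x + |γ' x| / 2 := by
          apply aux_sqrt_add_sq_le (mul_nonneg (abs_nonneg _) hFx.1) (by positivity)
      _ ≤ |τ| * ℓ + |γ' x| / 2 := by
          have := mul_le_mul_of_nonneg_left hFx.2 (abs_nonneg τ)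
          linarith

lemma aux_sqrt_add_sq_le' : True := trivial
lemma energy_nonneg (f₁ : ℝ → ℝ) (s : ℝ) (γ γ' : ℝ → ℝ) : 0 ≤ energy f₁ s γ γ' :=
  intervalIntegral.integral_nonneg (by norm_num) fun x _ => Real.sqrt_nonneg _

lemma g0_bddBelow (f₁ : ℝ → ℝ) (s : ℝ) :
    BddBelow {x | ∃ γ γ' : ℝ → ℝ, Admissible γ γ' ∧ x = energy f₁ s γ γ'} := by
  refine ⟨0, fun x hx => ?_⟩
  obtain ⟨γ, γ', _, rfl⟩ := hx
  exact energy_nonneg _ _ _ _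

lemma g0_le {f₁ : ℝ → ℝ} {s : ℝ} {γ γ' : ℝ → ℝ} (h : Admissible γ γ') :
    g0 f₁ s ≤ energy f₁ s γ γ' :=
  csInf_le (g0_bddBelow f₁ s) ⟨γ, γ', h, rfl⟩

lemma adm_ii {γ γ' : ℝ → ℝ} (h : Admissible γ γ') {a b : ℝ}
    (ha : 0 ≤ a) (hb : b ≤ 1) (hab : a ≤ b) : IntervalIntegrable γ' volume a b := by
  rw [intervalIntegrable_iff, uIoc_of_le hab]
  exact h.1.mono_set fun x hx => ⟨le_of_lt (lt_of_le_of_lt ha hx.1), hx.2.trans hb⟩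

lemma adm_max_le {γ γ' : ℝ → ℝ} (h : Admissible γ γ') {x : ℝ} (hx : x ∈ Icc (0:ℝ) 1) :
    γ x ≤ (∫ u in (0:ℝ)..1, |γ' u|) / 2 := by
  have i1 : IntervalIntegrable γ' volume 0 x := adm_ii h le_rfl hx.2 hx.1
  have i2 : IntervalIntegrable γ' volume x 1 := adm_ii h hx.1 le_rfl hx.2
  have hsum : (∫ u in (0:ℝ)..x, γ' u) + ∫ u in x..(1:ℝ), γ' u = ∫ u in (0:ℝ)..1, γ' u :=
    intervalIntegral.integral_add_adjacent_intervals i1 i2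
  have h10 : (∫ u in (0:ℝ)..1, γ' u) = 0 := by
    rw [← h.2.1 1 (by norm_num)]; exact h.2.2.2.2
  have hγx : γ x = ∫ u in (0:ℝ)..x, γ' u := h.2.1 x hx
  have b1 : (∫ u in (0:ℝ)..x, γ' u) ≤ ∫ u in (0:ℝ)..x, |γ' u| :=
    (le_abs_self _).trans (intervalIntegral.abs_integral_le_integral_abs hx.1)
  have b2 : -(∫ u in x..(1:ℝ), γ' u) ≤ ∫ u in x..(1:ℝ), |γ' u| := by
    refine (neg_le_abs _).trans (intervalIntegral.abs_integral_le_integral_abs hx.2)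
  have hsum2 : (∫ u in (0:ℝ)..x, |γ' u|) + ∫ u in x..(1:ℝ), |γ' u| = ∫ u in (0:ℝ)..1, |γ' u| :=
    intervalIntegral.integral_add_adjacent_intervals i1.abs i2.abs
  linarith
lemma lim0_bound {ℓ ℓ₁ : ℝ} {f₁ : ℝ → ℝ} (hl1 : 0 < ℓ₁) (f10 : f₁ 0 = ℓ)
    (lim0 : Tendsto (fun s => (f₁ s - ℓ + ℓ₁ * s) / s) (nhdsWithin 0 (Ioi 0)) (nhds 0)) :
    ∃ δ : ℝ, 0 < δ ∧ δ ≤ 1 ∧ ∀ u, 0 ≤ u → u ≤ δ → f₁ u ≤ ℓ - (ℓ₁/2) * u := by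
  rw [Metric.tendsto_nhdsWithin_nhds] at lim0
  obtain ⟨δ₀, hδ₀, hδ⟩ := lim0 (ℓ₁/2) (by linarith)
  refine ⟨min (δ₀/2) 1, by positivity, min_le_right _ _, fun u hu0 huδ => ?_⟩
  rcases eq_or_lt_of_le hu0 with h | h
  · rw [← h, f10]; linarith
  · have hdist : dist u 0 < δ₀ := by
      rw [Real.dist_eq, sub_zero, abs_of_pos h]
      have := le_trans huδ (min_le_left _ _); linarith
    have := hδ (mem_Ioi.mpr h) hdist
    rw [Real.dist_eq, sub_zero] at this
    have h2 := (abs_lt.mp this).2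
    rw [div_lt_iff₀ h] at h2
    nlinarith

lemma sin_deriv_aux (h : ℝ) (x : ℝ) :
    HasDerivAt (fun x => h * Real.sin (Real.pi * x) ^ 2)
      (h * Real.pi * Real.sin (2 * Real.pi * x)) x := by
  have h1 : HasDerivAt (fun x : ℝ => Real.pi * x) Real.pi x := by
    simpa using (hasDerivAt_id x).const_mul Real.pi
  have h2 : HasDerivAt (fun x => Real.sin (Real.pi * x)) (Real.cos (Real.pi * x) * Real.pi) x :=
    (Real.hasDerivAt_sin (Real.pi * x)).comp x h1
  have h3 := (h2.pow 2).const_mul h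
  refine h3.congr_deriv ?_
  rw [show 2 * Real.pi * x = 2 * (Real.pi * x) by ring, Real.sin_two_mul]
  norm_num
  ring

lemma integral_sin_pi : (∫ x in (0:ℝ)..1, Real.sin (Real.pi * x)) = 2 / Real.pi := by
  have hD : ∀ x ∈ uIcc (0:ℝ) 1, HasDerivAt (fun x => -Real.cos (Real.pi * x) / Real.pi)
      (Real.sin (Real.pi * x)) x := by
    intro x _
    have h1 : HasDerivAt (fun x : ℝ => Real.pi * x) Real.pi x := by
      simpa using (hasDerivAt_id x).const_mul Real.pi
    have h2 : HasDerivAt (fun x => Real.cos (Real.pi * x))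
        (-Real.sin (Real.pi * x) * Real.pi) x :=
      (Real.hasDerivAt_cos (Real.pi * x)).comp x h1
    have h3 := (h2.neg).div_const Real.pi
    refine h3.congr_deriv ?_
    field_simp
  have hInt : IntervalIntegrable (fun x => Real.sin (Real.pi * x)) volume 0 1 :=
    (Continuous.intervalIntegrable (by continuity) 0 1)
  rw [intervalIntegral.integral_eq_sub_of_hasDerivAt hD hInt]
  simp [Real.cos_pi]
  field_simp
  ring
lemma adm_sin {h : ℝ} (h0 : 0 < h) (h1 : h ≤ 1) :
    Admissible (fun x => h * Real.sin (Real.pi * x) ^ 2)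
      (fun x => h * Real.pi * Real.sin (2 * Real.pi * x)) := by
  have hcont : Continuous (fun x : ℝ => h * Real.pi * Real.sin (2 * Real.pi * x)) := by
    continuity
  refine ⟨hcont.integrableOn_Icc, fun t ht => ?_, fun t _ => ?_, by simp, by simp⟩
  · rw [intervalIntegral.integral_eq_sub_of_hasDerivAt
      (fun x _ => sin_deriv_aux h x) (hcont.intervalIntegrable 0 t)]
    simp
  · constructor
    · positivity
    · show h * Real.sin (Real.pi * t) ^ 2 ≤ 1
      nlinarith [Real.sin_sq_le_one (Real.pi * t)]

lemma g0_lt_sl {ℓ ℓ₁ : ℝ} {f₁ : ℝ → ℝ} (hf : F1Hyp ℓ ℓ₁ f₁) {s : ℝ} (hs : 0 < s) :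
    g0 f₁ s < s * ℓ := by
  obtain ⟨δ, hδ0, hδ1, hδ⟩ := lim0_bound hf.hl1 hf.f10 hf.lim0
  have hπ := Real.pi_pos
  have hl1 := hf.hl1
  set c : ℝ := s * ℓ₁ / Real.pi ^ 2 with hc
  have hc0 : 0 < c := by positivity
  set h : ℝ := min (δ^2) (min (c^2) 1) with hh
  have h0 : 0 < h := by positivity
  have h1 : h ≤ 1 := le_trans (min_le_right _ _) (min_le_right _ _)
  have hr0 : 0 < Real.sqrt h := Real.sqrt_pos.mpr h0
  have hr2 : Real.sqrt h ^ 2 = h := Real.sq_sqrt h0.le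
  have hrδ : Real.sqrt h ≤ δ := by
    rw [show δ = Real.sqrt (δ^2) from (Real.sqrt_sq hδ0.le).symm]
    exact Real.sqrt_le_sqrt (min_le_left _ _)
  have hrc : Real.sqrt h ≤ c := by
    rw [show c = Real.sqrt (c^2) from (Real.sqrt_sq hc0.le).symm]
    exact Real.sqrt_le_sqrt ((min_le_right _ _).trans (min_le_left _ _))
  set γ : ℝ → ℝ := fun x => h * Real.sin (Real.pi * x) ^ 2 with hγdef
  set γ' : ℝ → ℝ := fun x => h * Real.pi * Real.sin (2 * Real.pi * x) with hγ'def
  have hA : Admissible γ γ' := adm_sin h0 h1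
  have hbound : ∀ x ∈ Icc (0:ℝ) 1,
      Real.sqrt (s^2 * (f₁ (Real.sqrt (γ x)))^2 + (γ' x)^2/4)
        ≤ s*ℓ + h*Real.pi/2 - (s*ℓ₁/2) * (Real.sqrt h * Real.sin (Real.pi * x)) := by
    intro x hx
    have hsin0 : 0 ≤ Real.sin (Real.pi * x) :=
      Real.sin_nonneg_of_nonneg_of_le_pi (by nlinarith [hx.1]) (by nlinarith [hx.2])
    have hsin1 : Real.sin (Real.pi * x) ≤ 1 := Real.sin_le_one _
    have hsqγ : Real.sqrt (γ x) = Real.sqrt h * Real.sin (Real.pi * x) := by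
      rw [show γ x = (Real.sqrt h * Real.sin (Real.pi * x))^2 by
        rw [mul_pow, hr2]]
      exact Real.sqrt_sq (by positivity)
    set u := Real.sqrt h * Real.sin (Real.pi * x) with hu
    have hu0 : 0 ≤ u := by positivity
    have huδ : u ≤ δ := by nlinarith
    have hF : f₁ (Real.sqrt (γ x)) ≤ ℓ - (ℓ₁/2) * u := by rw [hsqγ]; exact hδ u hu0 huδ
    have hFnn : 0 ≤ f₁ (Real.sqrt (γ x)) := by
      apply hf.nonneg; rw [hsqγ]; exact ⟨hu0, le_trans huδ hδ1⟩
    have habs : |γ' x| / 2 ≤ h * Real.pi / 2 := by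
      have h3 : |γ' x| ≤ h * Real.pi := by
        rw [show γ' x = h * Real.pi * Real.sin (2*Real.pi*x) from rfl, abs_mul,
          abs_of_pos (by positivity : (0:ℝ) < h * Real.pi)]
        have h5 := abs_le.mpr ⟨Real.neg_one_le_sin (2*Real.pi*x), Real.sin_le_one (2*Real.pi*x)⟩
        have h6 := mul_le_mul_of_nonneg_left h5 (le_of_lt (by positivity : (0:ℝ) < h*Real.pi))
        simpa using h6
      linarith
    calc Real.sqrt (s^2 * (f₁ (Real.sqrt (γ x)))^2 + (γ' x)^2/4)
        = Real.sqrt ((s * f₁ (Real.sqrt (γ x)))^2 + (|γ' x|/2)^2) := by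
          congr 1
          rw [mul_pow, div_pow, sq_abs]; ring
      _ ≤ s * f₁ (Real.sqrt (γ x)) + |γ' x|/2 :=
          aux_sqrt_add_sq_le (mul_nonneg hs.le hFnn) (by positivity)
      _ ≤ s * (ℓ - (ℓ₁/2) * u) + h*Real.pi/2 := by
          have := mul_le_mul_of_nonneg_left hF hs.le
          linarith
      _ = s*ℓ + h*Real.pi/2 - (s*ℓ₁/2) * u := by ring
  have hIlhs := energy_integrand_integrable hf.cont hf.anti hf.nonneg hf.f10 hf.hl hA s
  have hsc : Continuous fun x : ℝ => Real.sin (Real.pi * x) :=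
    Real.continuous_sin.comp (continuous_const.mul continuous_id)
  have hc1 : Continuous fun x : ℝ => (s*ℓ₁/2) * (Real.sqrt h * Real.sin (Real.pi * x)) :=
    continuous_const.mul (continuous_const.mul hsc)
  have hIrhs : IntervalIntegrable
      (fun x => s*ℓ + h*Real.pi/2 - (s*ℓ₁/2) * (Real.sqrt h * Real.sin (Real.pi * x)))
      volume 0 1 :=
    Continuous.intervalIntegrable (continuous_const.sub hc1) 0 1
  have hmono := intervalIntegral.integral_mono_on (by norm_num : (0:ℝ) ≤ 1) hIlhs hIrhs hbound
  have hcomp : (∫ x in (0:ℝ)..1,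
      (s*ℓ + h*Real.pi/2 - (s*ℓ₁/2) * (Real.sqrt h * Real.sin (Real.pi * x))))
      = s*ℓ + h*Real.pi/2 - (s*ℓ₁/2) * (Real.sqrt h * (2/Real.pi)) := by
    rw [intervalIntegral.integral_sub (Continuous.intervalIntegrable continuous_const 0 1)
      (Continuous.intervalIntegrable hc1 0 1)]
    have h4 : (∫ x in (0:ℝ)..1, (s*ℓ₁/2) * (Real.sqrt h * Real.sin (Real.pi * x)))
        = (s*ℓ₁/2) * (Real.sqrt h * (2/Real.pi)) := by
      rw [intervalIntegral.integral_const_mul, intervalIntegral.integral_const_mul,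
        integral_sin_pi]
    rw [h4, intervalIntegral.integral_const]
    norm_num
  have hE : energy f₁ s γ γ' ≤ s*ℓ + h*Real.pi/2 - (s*ℓ₁/2) * (Real.sqrt h * (2/Real.pi)) := by
    rw [energy]; rw [hcomp] at hmono; exact hmono
  have hkey : s*ℓ + h*Real.pi/2 - (s*ℓ₁/2) * (Real.sqrt h * (2/Real.pi)) < s * ℓ := by
    have hc2 : c * Real.pi^2 = s * ℓ₁ := by
      rw [hc]; field_simp
    have e1 : (s*ℓ₁/2) * (Real.sqrt h * (2/Real.pi)) = s*ℓ₁*Real.sqrt h/Real.pi := by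
      field_simp
    rw [e1]
    have : h * Real.pi/2 < s*ℓ₁*Real.sqrt h/Real.pi := by
      rw [lt_div_iff₀ hπ]
      nlinarith [mul_pos (mul_pos hs hl1) hr0, mul_pos hπ hπ,
        mul_le_mul_of_nonneg_right hrc (mul_nonneg hr0.le (mul_pos hπ hπ).le)]
    linarith
  exact lt_of_le_of_lt (g0_le hA) (lt_of_le_of_lt hE hkey)
lemma G_integrable {ℓ : ℝ} {f₁ : ℝ → ℝ}
    (hcont : ContinuousOn f₁ (Icc 0 1))
    {γ γ' : ℝ → ℝ} (h : Admissible γ γ') (s : ℝ) :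
    IntervalIntegrable
      (fun x => ((γ' x)^2/4) / Real.sqrt (s^2 * (f₁ (Real.sqrt (γ x)))^2 + (γ' x)^2/4))
      volume 0 1 := by
  rw [intervalIntegrable_iff, uIoc_of_le (by norm_num : (0:ℝ) ≤ 1)]
  set F := fun x => f₁ (Real.sqrt (γ x)) with hF
  have hFc : ContinuousOn F (Icc 0 1) := adm_F_cont hcont h
  have hFm : AEStronglyMeasurable F (volume.restrict (Ioc (0:ℝ) 1)) :=
    (hFc.mono Ioc_subset_Icc_self).aestronglyMeasurable measurableSet_Ioc
  have hg'm : AEStronglyMeasurable γ' (volume.restrict (Ioc (0:ℝ) 1)) :=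
    (h.1.mono_set Ioc_subset_Icc_self).aestronglyMeasurable
  have hqm0 : AEStronglyMeasurable (fun x => (4:ℝ)⁻¹ * (γ' x * γ' x))
      (volume.restrict (Ioc (0:ℝ) 1)) := aestronglyMeasurable_const.mul (hg'm.mul hg'm)
  have hqm : AEStronglyMeasurable (fun x => (γ' x)^2/4) (volume.restrict (Ioc (0:ℝ) 1)) :=
    hqm0.congr (Eventually.of_forall fun x => by ring)
  have hAm : AEStronglyMeasurable (fun x => Real.sqrt (s^2 * (F x)^2 + (γ' x)^2/4))
      (volume.restrict (Ioc (0:ℝ) 1)) := by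
    apply Real.continuous_sqrt.comp_aestronglyMeasurable
    have h1 : AEStronglyMeasurable (fun x => s ^ 2 * (F x * F x) + (4:ℝ)⁻¹ * (γ' x * γ' x))
        (volume.restrict (Ioc (0:ℝ) 1)) :=
      (aestronglyMeasurable_const.mul (hFm.mul hFm)).add hqm0
    exact h1.congr (Eventually.of_forall fun x => by ring)
  refine Integrable.mono' (g := fun x => |γ' x| / 2) ?_
    ((hqm.aemeasurable.div hAm.aemeasurable).aestronglyMeasurable) ?_
  · exact (h.1.mono_set Ioc_subset_Icc_self).abs.div_const 2
  · filter_upwards with x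
    have hq0 : (0:ℝ) ≤ (γ' x)^2/4 := by positivity
    have hBA : |γ' x|/2 ≤ Real.sqrt (s^2 * (F x)^2 + (γ' x)^2/4) := by
      rw [show |γ' x|/2 = Real.sqrt (((γ' x))^2/4) by
        rw [show (γ' x)^2/4 = (|γ' x|/2)^2 by rw [div_pow, sq_abs]; norm_num]
        exact (Real.sqrt_sq (by positivity)).symm]
      exact Real.sqrt_le_sqrt (by nlinarith [mul_nonneg (sq_nonneg s) (sq_nonneg (F x))])
    rw [Real.norm_eq_abs, abs_of_nonneg (div_nonneg hq0 (Real.sqrt_nonneg _))]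
    rcases eq_or_lt_of_le (Real.sqrt_nonneg (s^2 * (F x)^2 + (γ' x)^2/4)) with h0 | h0
    · rw [← h0, div_zero]; positivity
    · rw [div_le_iff₀ h0]
      calc (γ' x)^2/4 = (|γ' x|/2) * (|γ' x|/2) := by
            rw [← sq_abs (γ' x)]; ring
        _ ≤ (|γ' x|/2) * Real.sqrt (s^2 * (F x)^2 + (γ' x)^2/4) := by
            apply mul_le_mul_of_nonneg_left hBA (by positivity)
/-- for every `s > 0` and `t ∈ (0,1)`, `g₀(t s) > t g₀(s)`. -/
theorem stmt_2 (ℓ ℓ₁ : ℝ) (f₁ : ℝ → ℝ) (hf : F1Hyp ℓ ℓ₁ f₁)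
    (s t : ℝ) (hs : 0 < s) (ht : t ∈ Ioo (0:ℝ) 1) :
    t * g0 f₁ s < g0 f₁ (t * s) := by
  obtain ⟨ht0, ht1⟩ := ht
  have hglt : g0 f₁ s < s * ℓ := g0_lt_sl hf hs
  set g := g0 f₁ s with hgdef
  -- choose η with g < s * f₁ (√η)
  obtain ⟨η, hη0, hη1, hηg⟩ : ∃ η : ℝ, 0 < η ∧ η ≤ 1 ∧ g < s * f₁ (Real.sqrt η) := by
    have hmaps : MapsTo Real.sqrt (Icc 0 1) (Icc (0:ℝ) 1) := fun u hu =>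
      ⟨Real.sqrt_nonneg _, Real.sqrt_le_one.mpr hu.2⟩
    have h1 : ContinuousWithinAt (fun u : ℝ => f₁ (Real.sqrt u)) (Icc 0 1) 0 := by
      refine ContinuousWithinAt.comp ?_ Real.continuous_sqrt.continuousWithinAt hmaps
      rw [Real.sqrt_zero]
      exact hf.cont 0 ⟨le_rfl, zero_le_one⟩
    have h2 : Tendsto (fun u : ℝ => s * f₁ (Real.sqrt u)) (nhdsWithin 0 (Icc 0 1))
        (nhds (s * ℓ)) := by
      have := h1.tendsto
      rw [Real.sqrt_zero, hf.f10] at this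
      exact this.const_mul s
    have ev : ∀ᶠ u in nhdsWithin 0 (Icc (0:ℝ) 1), g < s * f₁ (Real.sqrt u) :=
      h2.eventually (eventually_gt_nhds hglt)
    obtain ⟨ε, hε, hsub⟩ := Metric.mem_nhdsWithin_iff.mp ev
    refine ⟨min (ε/2) 1, by positivity, min_le_right _ _, ?_⟩
    refine hsub ⟨?_, ⟨by positivity, min_le_right _ _⟩⟩
    rw [Metric.mem_ball, Real.dist_eq, sub_zero, abs_of_pos (by positivity)]
    calc min (ε/2) 1 ≤ ε/2 := min_le_left _ _
      _ < ε := by linarith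
  have hsl : 0 < s * ℓ := mul_pos hs hf.hl
  set β : ℝ := η / 2 with hβdef
  have hβ : 0 < β := by positivity
  set C : ℝ := 1 + (s*ℓ)/β with hCdef
  have hC : 0 < C := by positivity
  set ε₀ : ℝ := β / C with hε₀def
  have hε₀ : 0 < ε₀ := by positivity
  have hCε₀ : C * ε₀ = β := by
    rw [hε₀def, mul_div_cancel₀ _ hC.ne']
  set c : ℝ := min (t*g + (1-t)*ε₀) (t*(s*f₁ (Real.sqrt η))) with hcdef
  have hcgt : t*g < c := by
    refine lt_min ?_ ?_
    · nlinarith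
    · exact mul_lt_mul_of_pos_left hηg ht0
  refine lt_of_lt_of_le hcgt (le_csInf ⟨energy f₁ (t*s) (fun _ => 0) (fun _ => 0),
    (fun _ => 0), (fun _ => 0), adm_zero, rfl⟩ ?_)
  rintro x ⟨γ, γ', hA, rfl⟩
  -- notation
  have hgle : g ≤ energy f₁ s γ γ' := g0_le hA
  have iiT := energy_integrand_integrable hf.cont hf.anti hf.nonneg hf.f10 hf.hl hA (t*s)
  have iiA := energy_integrand_integrable hf.cont hf.anti hf.nonneg hf.f10 hf.hl hA s
  have iiG := G_integrable (ℓ := ℓ) hf.cont hA s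
  have iiB : IntervalIntegrable (fun x => |γ' x|/2) volume 0 1 :=
    ((adm_ii hA le_rfl le_rfl zero_le_one).abs).div_const 2
  -- facts about F
  have hsqIcc : ∀ x ∈ Icc (0:ℝ) 1, Real.sqrt (γ x) ∈ Icc (0:ℝ) 1 := fun x hx =>
    ⟨Real.sqrt_nonneg _, Real.sqrt_le_one.mpr (hA.2.2.1 x hx).2⟩
  have hFnn : ∀ x ∈ Icc (0:ℝ) 1, 0 ≤ f₁ (Real.sqrt (γ x)) := fun x hx =>
    hf.nonneg _ (hsqIcc x hx)
  have hFle : ∀ x ∈ Icc (0:ℝ) 1, f₁ (Real.sqrt (γ x)) ≤ ℓ := fun x hx =>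
    f1_le hf.anti hf.f10 (hsqIcc x hx)
  -- pointwise key inequality
  have hP1 : ∀ x ∈ Icc (0:ℝ) 1,
      t * Real.sqrt (s^2 * (f₁ (Real.sqrt (γ x)))^2 + (γ' x)^2/4)
        + (1-t) * (((γ' x)^2/4) / Real.sqrt (s^2 * (f₁ (Real.sqrt (γ x)))^2 + (γ' x)^2/4))
      ≤ Real.sqrt ((t*s)^2 * (f₁ (Real.sqrt (γ x)))^2 + (γ' x)^2/4) := by
    intro x _
    have e1 : s^2 * (f₁ (Real.sqrt (γ x)))^2 = (s * f₁ (Real.sqrt (γ x)))^2 := by ring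
    have e2 : (t*s)^2 * (f₁ (Real.sqrt (γ x)))^2 = t^2 * (s * f₁ (Real.sqrt (γ x)))^2 := by
      ring
    rw [e1, e2]
    exact aux_key t (s * f₁ (Real.sqrt (γ x))) ((γ' x)^2/4) ht0.le ht1.le (by positivity)
  have hint1 : IntervalIntegrable (fun x =>
      t * Real.sqrt (s^2 * (f₁ (Real.sqrt (γ x)))^2 + (γ' x)^2/4)
        + (1-t) * (((γ' x)^2/4) / Real.sqrt (s^2 * (f₁ (Real.sqrt (γ x)))^2 + (γ' x)^2/4)))
      volume 0 1 := (iiA.const_mul t).add (iiG.const_mul (1-t))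
  have h5 := intervalIntegral.integral_mono_on (by norm_num : (0:ℝ) ≤ 1) hint1 iiT hP1
  have h6 : (∫ x in (0:ℝ)..1,
      (t * Real.sqrt (s^2 * (f₁ (Real.sqrt (γ x)))^2 + (γ' x)^2/4)
        + (1-t) * (((γ' x)^2/4) / Real.sqrt (s^2 * (f₁ (Real.sqrt (γ x)))^2 + (γ' x)^2/4))))
      = t * energy f₁ s γ γ'
        + (1-t) * ∫ x in (0:ℝ)..1,
            ((γ' x)^2/4) / Real.sqrt (s^2 * (f₁ (Real.sqrt (γ x)))^2 + (γ' x)^2/4) := by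
    rw [intervalIntegral.integral_add (iiA.const_mul t) (iiG.const_mul (1-t)),
      intervalIntegral.integral_const_mul, intervalIntegral.integral_const_mul, energy]
  set IG : ℝ := ∫ x in (0:ℝ)..1,
      ((γ' x)^2/4) / Real.sqrt (s^2 * (f₁ (Real.sqrt (γ x)))^2 + (γ' x)^2/4) with hIGdef
  have hTe : energy f₁ (t*s) γ γ'
      = ∫ x in (0:ℝ)..1, Real.sqrt ((t*s)^2 * (f₁ (Real.sqrt (γ x)))^2 + (γ' x)^2/4) := rfl
  rcases le_or_gt ε₀ IG with hcase | hcase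
  · -- case 1
    have : t * g + (1-t) * ε₀ ≤ energy f₁ (t*s) γ γ' := by
      rw [hTe]
      refine le_trans ?_ h5
      rw [h6]
      have := mul_le_mul_of_nonneg_left hgle ht0.le
      have := mul_le_mul_of_nonneg_left hcase (by linarith : (0:ℝ) ≤ 1 - t)
      linarith
    exact le_trans (min_le_left _ _) this
  · -- case 2 : small variation
    have hP2 : ∀ x ∈ Icc (0:ℝ) 1, |γ' x|/2 ≤ β
        + C * (((γ' x)^2/4) / Real.sqrt (s^2 * (f₁ (Real.sqrt (γ x)))^2 + (γ' x)^2/4)) := by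
      intro x hx
      have hb : (0:ℝ) ≤ |γ' x|/2 := by positivity
      have hq : (γ' x)^2/4 = (|γ' x|/2)^2 := by rw [div_pow, sq_abs]; norm_num
      have hbA : |γ' x|/2 ≤ Real.sqrt (s^2 * (f₁ (Real.sqrt (γ x)))^2 + (γ' x)^2/4) := by
        rw [show |γ' x|/2 = Real.sqrt ((|γ' x|/2)^2) from (Real.sqrt_sq hb).symm, ← hq]
        exact Real.sqrt_le_sqrt
          (by nlinarith [mul_nonneg (sq_nonneg s) (sq_nonneg (f₁ (Real.sqrt (γ x))))])
      have hAc : Real.sqrt (s^2 * (f₁ (Real.sqrt (γ x)))^2 + (γ' x)^2/4) ≤ s*ℓ + |γ' x|/2 := by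
        have e1 : s^2 * (f₁ (Real.sqrt (γ x)))^2 + (γ' x)^2/4
            = (s * f₁ (Real.sqrt (γ x)))^2 + (|γ' x|/2)^2 := by
          rw [hq]; ring
        rw [e1]
        refine le_trans (aux_sqrt_add_sq_le (mul_nonneg hs.le (hFnn x hx)) hb) ?_
        have := mul_le_mul_of_nonneg_left (hFle x hx) hs.le
        linarith
      have := aux_bbound hb hbA hAc hβ hsl.le
      rw [← hCdef, ← hq] at this
      exact this
    have hint2 : IntervalIntegrable (fun x => β
        + C * (((γ' x)^2/4) / Real.sqrt (s^2 * (f₁ (Real.sqrt (γ x)))^2 + (γ' x)^2/4)))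
        volume 0 1 := intervalIntegrable_const.add (iiG.const_mul C)
    have hV1 := intervalIntegral.integral_mono_on (by norm_num : (0:ℝ) ≤ 1) iiB hint2 hP2
    have hV2 : (∫ x in (0:ℝ)..1, (β
        + C * (((γ' x)^2/4) / Real.sqrt (s^2 * (f₁ (Real.sqrt (γ x)))^2 + (γ' x)^2/4))))
        = β + C * IG := by
      rw [intervalIntegral.integral_add intervalIntegrable_const (iiG.const_mul C),
        intervalIntegral.integral_const_mul, intervalIntegral.integral_const]
      norm_num
      exact Or.inl hIGdef.symm
    have hVη : (∫ x in (0:ℝ)..1, |γ' x|/2) ≤ η := by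
      rw [hV2] at hV1
      have : C * IG ≤ C * ε₀ := mul_le_mul_of_nonneg_left hcase.le hC.le
      rw [hCε₀] at this
      have : β + C * IG ≤ β + β := by linarith
      rw [hβdef] at this
      linarith
    have hγη : ∀ x ∈ Icc (0:ℝ) 1, γ x ≤ η := by
      intro x hx
      have h7 := adm_max_le hA hx
      have h8 : (∫ u in (0:ℝ)..1, |γ' u|) / 2 = ∫ u in (0:ℝ)..1, |γ' u|/2 := by
        rw [intervalIntegral.integral_div]
      rw [h8] at h7
      exact h7.trans hVη
    have hP3 : ∀ x ∈ Icc (0:ℝ) 1, t*s*f₁ (Real.sqrt η)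
        ≤ Real.sqrt ((t*s)^2 * (f₁ (Real.sqrt (γ x)))^2 + (γ' x)^2/4) := by
      intro x hx
      have hts : 0 ≤ t*s := by positivity
      have h9 : t*s*f₁ (Real.sqrt (γ x))
          ≤ Real.sqrt ((t*s)^2 * (f₁ (Real.sqrt (γ x)))^2 + (γ' x)^2/4) := by
        rw [show t*s*f₁ (Real.sqrt (γ x)) = Real.sqrt ((t*s*f₁ (Real.sqrt (γ x)))^2) from
          (Real.sqrt_sq (mul_nonneg hts (hFnn x hx))).symm]
        exact Real.sqrt_le_sqrt (by nlinarith [sq_nonneg (γ' x)])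
      refine le_trans ?_ h9
      have h10 : f₁ (Real.sqrt η) ≤ f₁ (Real.sqrt (γ x)) := by
        refine hf.anti.antitoneOn (hsqIcc x hx)
          ⟨Real.sqrt_nonneg _, Real.sqrt_le_one.mpr hη1⟩ (Real.sqrt_le_sqrt (hγη x hx))
      exact mul_le_mul_of_nonneg_left h10 hts
    have h11 := intervalIntegral.integral_mono_on (by norm_num : (0:ℝ) ≤ 1)
      intervalIntegrable_const iiT hP3
    rw [intervalIntegral.integral_const] at h11
    simp only [sub_zero, one_smul] at h11
    refine le_trans (min_le_right _ _) ?_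
    rw [hTe]
    calc t*(s*f₁ (Real.sqrt η)) = t*s*f₁ (Real.sqrt η) := by ring
      _ ≤ _ := h11
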